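/- Let M be an s×s real symmetric positive semidefinite matrix with eigenvalues λ_1 ≤ λ_2 ≤ ⋯ ≤ λ_s listed with multiplicity, and let ε > 0. Then the minimum of dim Θ over all subspaces Θ ⊆ ℝ^s satisfying ‖x − P_Θ x‖₂ ≤ ε √(xᵀM x) for all x ∈ ℝ^s equals the number of indices i ∈ {1,…,s} with λ_i < ε⁻²; equivalently, it equals the smallest integer q such that either q = s or λ_{q+1} ≥ ε⁻². -/

import Mathlib

open Matrix BigOperators

noncomputable section

/-- Euclidean norm of a vector. -/
def norm2 {ι : Type} [Fintype ι] (x : ι → ℝ) : ℝ := Real.sqrt (x ⬝ᵥ x)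

/-- `A`-energy norm of a vector: `‖x‖_A = √(xᵀ A x)`. -/
def normA {ι : Type} [Fintype ι] (A : Matrix ι ι ℝ) (x : ι → ℝ) : ℝ :=
  Real.sqrt (x ⬝ᵥ A.mulVec x)

/-- Spectral (ℓ²-operator) norm of a square real matrix. -/
def specNorm {ι : Type} [Fintype ι] [DecidableEq ι] (B : Matrix ι ι ℝ) : ℝ :=
  ‖Matrix.toEuclideanCLM (𝕜 := ℝ) B‖

/-- Smallest value of the Rayleigh quotient; for a symmetric matrix this is the
smallest eigenvalue. -/
def lamMin {ι : Type} [Fintype ι] (B : Matrix ι ι ℝ) : ℝ :=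
  sInf {r : ℝ | ∃ x : ι → ℝ, x ⬝ᵥ x = 1 ∧ r = x ⬝ᵥ B.mulVec x}

/-- Largest value of the Rayleigh quotient; for a symmetric matrix this is the
largest eigenvalue. -/
def lamMax {ι : Type} [Fintype ι] (B : Matrix ι ι ℝ) : ℝ :=
  sSup {r : ℝ | ∃ x : ι → ℝ, x ⬝ᵥ x = 1 ∧ r = x ⬝ᵥ B.mulVec x}

set_option maxHeartbeats 1000000 in
/-- For an `s × s` real symmetric positive semidefinite matrix `M` and
`ε > 0`, the minimum of `dim Θ` over all subspaces `Θ ⊆ ℝˢ` with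
`‖x − P_Θ x‖₂ ≤ ε √(xᵀ M x)` for all `x` equals the number of eigenvalues of `M`
(counted with multiplicity) that are `< ε⁻²`.  (Since `P_Θ x` is the closest point of `Θ`
to `x`, the defining property of `Θ` is phrased as: for every `x` there is `y ∈ Θ` with
`‖x − y‖₂ ≤ ε √(xᵀ M x)`.) -/
theorem minimal_dimension_eq_eigenvalue_count {s : ℕ}
    (M : Matrix (Fin s) (Fin s) ℝ) (hM : M.PosSemidef) (ε : ℝ) (hε : 0 < ε) :
    IsLeast {d : ℕ | ∃ Θ : Submodule ℝ (Fin s → ℝ),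
        (∀ x : Fin s → ℝ, ∃ y ∈ Θ,
          norm2 (x - y) ≤ ε * Real.sqrt (x ⬝ᵥ M.mulVec x)) ∧
        Module.finrank ℝ Θ = d}
      (Finset.univ.filter fun i => hM.isHermitian.eigenvalues i < ε⁻¹ ^ 2).card := by
  classical
  have hH := hM.isHermitian
  set b := hH.eigenvectorBasis with hb
  set lam := hH.eigenvalues with hlam
  set P : Finset (Fin s) := Finset.univ.filter (fun i => lam i < ε⁻¹ ^ 2) with hP
  have hlam_nonneg : ∀ i, 0 ≤ lam i := fun i => hM.eigenvalues_nonneg i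
  have hMT : Mᵀ = M := by simpa using hH.eq
  -- coefficient formula
  have hreprM : ∀ (x : EuclideanSpace ℝ (Fin s)) (i : Fin s),
      b.repr (WithLp.toLp 2 (M *ᵥ x)) i = lam i * b.repr x i := by
    intro x i
    rw [b.repr_apply_apply, b.repr_apply_apply]
    have h1 : (inner ℝ (b i) (WithLp.toLp 2 (M *ᵥ x : Fin s → ℝ))) =
        ((b i : Fin s → ℝ) ⬝ᵥ (M *ᵥ (x : Fin s → ℝ))) := by
      simp [PiLp.inner_apply, dotProduct, RCLike.inner_apply, mul_comm]
    have h2 : (inner ℝ (b i) x : ℝ) = ((b i : Fin s → ℝ) ⬝ᵥ (x : Fin s → ℝ)) := by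
      simp [PiLp.inner_apply, dotProduct, RCLike.inner_apply, mul_comm]
    have h3 : M *ᵥ (b i : Fin s → ℝ) = lam i • (b i : Fin s → ℝ) :=
      hH.mulVec_eigenvectorBasis i
    rw [h1, h2, Matrix.dotProduct_mulVec, ← Matrix.mulVec_transpose, hMT, h3,
      smul_dotProduct]
    rfl
  have key : ∀ x : EuclideanSpace ℝ (Fin s),
      ((x : Fin s → ℝ) ⬝ᵥ M *ᵥ (x : Fin s → ℝ)) = ∑ i, lam i * (b.repr x i)^2 := by
    intro x
    have h0 : ((x : Fin s → ℝ) ⬝ᵥ M *ᵥ (x : Fin s → ℝ)) =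
        (inner ℝ x (WithLp.toLp 2 (M *ᵥ x : Fin s → ℝ)) : ℝ) := by
      simp [PiLp.inner_apply, dotProduct, RCLike.inner_apply, mul_comm]
    rw [h0, ← b.repr.inner_map_map, PiLp.inner_apply]
    refine Finset.sum_congr rfl fun i _ => ?_
    rw [hreprM]
    simp [RCLike.inner_apply]
    ring
  have hsq : ∀ z : EuclideanSpace ℝ (Fin s), ‖z‖^2 = ∑ i, z i ^ 2 := by
    intro z
    rw [EuclideanSpace.norm_eq, Real.sq_sqrt (by positivity)]
    simp [sq_abs]
  have hn : ∀ z : EuclideanSpace ℝ (Fin s), norm2 (z : Fin s → ℝ) = ‖z‖ := by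
    intro z
    rw [norm2, EuclideanSpace.norm_eq]
    congr 1
    simp [dotProduct, Real.norm_eq_abs, sq_abs, sq]
  -- the subspace spanned by low eigenvectors
  set V : Submodule ℝ (EuclideanSpace ℝ (Fin s)) :=
    Submodule.span ℝ (Set.range (⇑b ∘ (Subtype.val : P → Fin s))) with hV
  have hVrank : Module.finrank ℝ V = P.card := by
    rw [hV, finrank_span_eq_card (b.orthonormal.linearIndependent.comp _ Subtype.val_injective)]
    exact Fintype.card_coe P
  have hmemV : ∀ i ∈ P, b i ∈ V := fun i hi => Submodule.subset_span ⟨⟨i, hi⟩, rfl⟩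
  -- support of members of V
  have hsupp : ∀ z ∈ V, ∀ j, j ∉ P → b.repr z j = 0 := by
    intro z hz
    refine Submodule.span_induction ?_ ?_ ?_ ?_ hz
    · rintro _ ⟨⟨i, hi⟩, rfl⟩ j hj
      have hji : j ≠ i := fun h => hj (h ▸ hi)
      simp [b.repr_self, EuclideanSpace.single_apply, hji]
    · intro j _; simp
    · intro u v _ _ hu hv j hj; simp [map_add, hu j hj, hv j hj]
    · intro a u _ hu j hj; simp [_root_.map_smul, hu j hj]
  constructor
  · -- membership
    refine ⟨V.map (WithLp.linearEquiv 2 ℝ (Fin s → ℝ) : EuclideanSpace ℝ (Fin s) →ₗ[ℝ] (Fin s → ℝ)), ?_,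
      (LinearEquiv.finrank_map_eq (WithLp.linearEquiv 2 ℝ (Fin s → ℝ)) V).trans hVrank⟩
    intro x
    set x' : EuclideanSpace ℝ (Fin s) := WithLp.toLp 2 x with hx'
    set y : EuclideanSpace ℝ (Fin s) := ∑ i ∈ P, b.repr x' i • b i with hy
    have hyV : y ∈ V := Submodule.sum_mem _ fun i hi => Submodule.smul_mem _ _ (hmemV i hi)
    refine ⟨y.ofLp, Submodule.mem_map_of_mem hyV, ?_⟩
    have hrepry : ∀ j, b.repr y j = if j ∈ P then b.repr x' j else 0 := by
      intro j
      have h1 : b.repr y j = ∑ i ∈ P, b.repr x' i * (if j = i then 1 else 0) := by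
        rw [hy, map_sum]
        rw [WithLp.ofLp_sum, Finset.sum_apply]
        refine Finset.sum_congr rfl fun i _ => ?_
        rw [_root_.map_smul]
        simp [b.repr_self, EuclideanSpace.single_apply]
      rw [h1]
      simp [mul_ite, Finset.sum_ite_eq]
    have hrepr_sub : ∀ j, b.repr (x' - y) j = if j ∈ P then 0 else b.repr x' j := by
      intro j
      rw [map_sub, PiLp.sub_apply, hrepry j]
      by_cases hj : j ∈ P <;> simp [hj]
    have hnorm_sub_sq : ‖x' - y‖^2 = ∑ j ∈ Pᶜ, (b.repr x') j ^ 2 := by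
      rw [← b.repr.norm_map (x' - y), hsq, ← Finset.sum_subset (Finset.subset_univ Pᶜ)]
      · refine Finset.sum_congr rfl fun j hj => ?_
        rw [hrepr_sub j, if_neg (by simpa using hj)]
      · intro j _ hj
        rw [hrepr_sub j, if_pos (by simpa using hj)]
        simp
    have hMx : ((x : Fin s → ℝ) ⬝ᵥ M *ᵥ x) = ∑ i, lam i * (b.repr x' i)^2 := key x'
    have hbound : ‖x' - y‖^2 ≤ ε^2 * ((x : Fin s → ℝ) ⬝ᵥ M *ᵥ x) := by
      rw [hnorm_sub_sq, hMx]
      have h1 : ∑ j ∈ Pᶜ, (b.repr x') j ^ 2 ≤ ε^2 * ∑ j ∈ Pᶜ, lam j * (b.repr x') j ^ 2 := by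
        rw [Finset.mul_sum]
        refine Finset.sum_le_sum fun j hj => ?_
        have hj' : ¬ lam j < ε⁻¹ ^ 2 := by
          have := Finset.mem_compl.mp hj
          simpa [hP] using this
        push_neg at hj'
        have h5 : ε⁻¹^2 * (b.repr x') j ^2 ≤ lam j * (b.repr x') j ^ 2 :=
          mul_le_mul_of_nonneg_right hj' (sq_nonneg _)
        calc (b.repr x') j ^ 2 = ε^2 * (ε⁻¹^2 * (b.repr x') j ^2) := by
              field_simp
          _ ≤ ε^2 * (lam j * (b.repr x') j ^ 2) :=
              mul_le_mul_of_nonneg_left h5 (sq_nonneg _)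
      refine h1.trans ?_
      refine mul_le_mul_of_nonneg_left ?_ (sq_nonneg _)
      refine Finset.sum_le_sum_of_subset_of_nonneg (Finset.subset_univ _) fun i _ _ => ?_
      exact mul_nonneg (hlam_nonneg i) (sq_nonneg _)
    have h2 : ‖x' - y‖ ≤ Real.sqrt (ε^2 * ((x : Fin s → ℝ) ⬝ᵥ M *ᵥ x)) := by
      rw [← Real.sqrt_sq (norm_nonneg (x' - y))]
      exact Real.sqrt_le_sqrt hbound
    rw [Real.sqrt_mul (sq_nonneg ε), Real.sqrt_sq hε.le] at h2
    exact le_trans (le_of_eq (hn (x' - y))) h2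
  · -- lower bound
    rintro d ⟨Θ, hprop, hrank⟩
    by_contra hlt
    push_neg at hlt
    have hΘ' : ∃ Θ' : Submodule ℝ (EuclideanSpace ℝ (Fin s)),
        Module.finrank ℝ Θ' = d ∧ ∀ u : EuclideanSpace ℝ (Fin s), (u : Fin s → ℝ) ∈ Θ ↔ u ∈ Θ' :=
      ⟨Θ.map ((WithLp.linearEquiv 2 ℝ (Fin s → ℝ)).symm : (Fin s → ℝ) →ₗ[ℝ] EuclideanSpace ℝ (Fin s)),
        (LinearEquiv.finrank_map_eq (WithLp.linearEquiv 2 ℝ (Fin s → ℝ)).symm Θ).trans hrank,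
        fun u => by rw [Submodule.mem_map_equiv]; rfl⟩
    obtain ⟨Θ', hrank', hmem'⟩ := hΘ'
    have h2 : Module.finrank ℝ Θ' + Module.finrank ℝ Θ'ᗮ = s := by
      rw [Submodule.finrank_add_finrank_orthogonal]; exact finrank_euclideanSpace_fin
    have h1 := Submodule.finrank_sup_add_finrank_inf_eq V Θ'ᗮ
    have h3 : Module.finrank ℝ ↥(V ⊔ Θ'ᗮ) ≤ s := by
      have := Submodule.finrank_le (V ⊔ Θ'ᗮ)
      rwa [finrank_euclideanSpace_fin] at this
    have hpos : 0 < Module.finrank ℝ ↥(V ⊓ Θ'ᗮ) := by omega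
    rw [Module.finrank_pos_iff] at hpos
    obtain ⟨⟨x, hx⟩, hx0⟩ := exists_ne (0 : ↥(V ⊓ Θ'ᗮ))
    have hxne : x ≠ 0 := by simpa [Submodule.mk_eq_zero] using hx0
    obtain ⟨hxV, hxO⟩ := Submodule.mem_inf.mp hx
    have hxsupp := hsupp x hxV
    -- energy bound
    have hxM : ((x : Fin s → ℝ) ⬝ᵥ M *ᵥ x) < ε⁻¹^2 * ‖x‖^2 := by
      rw [key x, ← b.repr.norm_map x, hsq, Finset.mul_sum]
      have hsum1 : ∑ i, lam i * (b.repr x i)^2 = ∑ i ∈ P, lam i * (b.repr x i)^2 := by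
        rw [← Finset.sum_subset (Finset.subset_univ P)]
        intro i _ hi
        rw [hxsupp i hi]; ring
      have hsum2 : ∑ i, ε⁻¹^2 * (b.repr x i)^2 = ∑ i ∈ P, ε⁻¹^2 * (b.repr x i)^2 := by
        rw [← Finset.sum_subset (Finset.subset_univ P)]
        intro i _ hi
        rw [hxsupp i hi]; ring
      rw [hsum1, hsum2]
      obtain ⟨i0, hi0ne⟩ : ∃ i, b.repr x i ≠ 0 := by
        by_contra h
        push_neg at h
        apply hxne
        have hz : b.repr x = 0 := by ext i; exact h i
        simpa using congrArg b.repr.symm hz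
      have hi0P : i0 ∈ P := by
        by_contra h
        exact hi0ne (hxsupp i0 h)
      refine Finset.sum_lt_sum (fun i hi => ?_) ⟨i0, hi0P, ?_⟩
      · have : lam i < ε⁻¹^2 := by simpa [hP] using hi
        exact mul_le_mul_of_nonneg_right this.le (sq_nonneg _)
      · have hli : lam i0 < ε⁻¹^2 := by simpa [hP] using hi0P
        have hc : 0 < (b.repr x i0)^2 :=
          lt_of_le_of_ne (sq_nonneg _) (Ne.symm (pow_ne_zero 2 hi0ne))
        exact mul_lt_mul_of_pos_right hli hc
    have hxnorm : 0 < ‖x‖ := norm_pos_iff.mpr hxne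
    obtain ⟨y, hyΘ, hle⟩ := hprop x
    set y' : EuclideanSpace ℝ (Fin s) := WithLp.toLp 2 y with hy'
    have hyΘ' : y' ∈ Θ' := (hmem' y').mp hyΘ
    have hinner : (inner ℝ x y' : ℝ) = 0 := by
      rw [real_inner_comm]
      exact (Submodule.mem_orthogonal Θ' x).mp hxO y' hyΘ'
    have hdist : ‖x‖ ≤ ‖x - y'‖ := by
      have h4 : ‖x - y'‖^2 = ‖x‖^2 - 2 * inner ℝ x y' + ‖y'‖^2 := norm_sub_sq_real x y'
      rw [hinner] at h4
      nlinarith [norm_nonneg (x - y'), sq_nonneg ‖y'‖]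
    have hsmall : ε * Real.sqrt ((x : Fin s → ℝ) ⬝ᵥ M *ᵥ x) < ‖x‖ := by
      have hs : Real.sqrt ((x : Fin s → ℝ) ⬝ᵥ M *ᵥ x) < Real.sqrt (ε⁻¹^2 * ‖x‖^2) :=
        Real.sqrt_lt_sqrt (by simpa using hM.dotProduct_mulVec_nonneg x.ofLp) hxM
      have heq : Real.sqrt (ε⁻¹^2 * ‖x‖^2) = ε⁻¹ * ‖x‖ := by
        rw [Real.sqrt_mul (sq_nonneg _), Real.sqrt_sq (by positivity), Real.sqrt_sq (norm_nonneg _)]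
      rw [heq] at hs
      calc ε * Real.sqrt ((x : Fin s → ℝ) ⬝ᵥ M *ᵥ x) < ε * (ε⁻¹ * ‖x‖) :=
            mul_lt_mul_of_pos_left hs hε
        _ = ‖x‖ := by field_simp
    have hle' : ‖x - y'‖ ≤ ε * Real.sqrt ((x : Fin s → ℝ) ⬝ᵥ M *ᵥ x) :=
      le_trans (le_of_eq (hn (x - y')).symm) hle
    linarith
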